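/- Let x ∈ T^G be a valid G-Wang tiling, F ⊆ G a finite subset, g a generator and c a color. Then |#{h ∈ F : x_h(g) = c} − #{h ∈ F : x_h(g⁻¹) = c}| ≤ #(F g △ F) + #(F g⁻¹ △ F). -/
import Mathlib


/-- The group element corresponding to a direction. -/
def dirElem {G : Type*} [Group G] {d : ℕ} (gen : Fin d → G) : Fin d × Bool → G
  | (i, true) => gen i
  | (i, false) => (gen i)⁻¹

/-- The opposite direction. -/
def invDir {d : ℕ} : Fin d × Bool → Fin d × Bool
  | (i, b) => (i, !b)

lemma filter_card_le_aux {α : Type*} [DecidableEq α] {p : α → Prop} [DecidablePred p]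
    (s t : Finset α) : (s.filter p).card ≤ (t.filter p).card + (s \ t).card := by
  have hsub : s.filter p ⊆ t.filter p ∪ (s \ t) := by
    intro a ha
    simp only [Finset.mem_filter, Finset.mem_union, Finset.mem_sdiff] at *
    by_cases h : a ∈ t
    · exact Or.inl ⟨h, ha.2⟩
    · exact Or.inr ⟨ha.1, h⟩
  exact (Finset.card_le_card hsub).trans (Finset.card_union_le _ _)

lemma sdiff_card_le_symmDiff {α : Type*} [DecidableEq α] (s t : Finset α) :
    (s \ t).card ≤ (symmDiff s t).card := by
  apply Finset.card_le_card
  intro a ha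
  rw [Finset.mem_symmDiff]
  simp only [Finset.mem_sdiff] at ha
  exact Or.inl ha

/-- For a valid Wang tiling `x` of `G`, a finite subset `F ⊆ G`, a generator `gᵢ` and a
color `c`: the difference between the number of `h ∈ F` whose tile shows `c` on side `gᵢ`
and the number of `h ∈ F` whose tile shows `c` on side `gᵢ⁻¹` is bounded by
`#(F gᵢ △ F) + #(F gᵢ⁻¹ △ F)`. -/
theorem tiling_count_diff_le_boundary {G : Type*} [Group G] [DecidableEq G]
    {d : ℕ} (gen : Fin d → G) {T C : Type*} [DecidableEq C]
    (tile : T → Fin d × Bool → C) (x : G → T)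
    (hx : ∀ (g : G) (s : Fin d × Bool),
      tile (x g) s = tile (x (g * dirElem gen s)) (invDir s))
    (F : Finset G) (i : Fin d) (c : C) :
    |((F.filter (fun h => tile (x h) (i, true) = c)).card : ℤ) -
        ((F.filter (fun h => tile (x h) (i, false) = c)).card : ℤ)| ≤
      (symmDiff (F.image (· * gen i)) F).card +
        (symmDiff (F.image (· * (gen i)⁻¹)) F).card := by
  have h1 : (F.filter (fun h => tile (x h) (i, true) = c)).card
      = ((F.image (· * gen i)).filter (fun h => tile (x h) (i, false) = c)).card := by
    rw [Finset.filter_image,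
      Finset.card_image_of_injective _ (mul_left_injective (gen i))]
    congr 1
    apply Finset.filter_congr
    intro h _
    simp [hx h (i, true), dirElem, invDir]
  have h2 : (F.filter (fun h => tile (x h) (i, false) = c)).card
      = ((F.image (· * (gen i)⁻¹)).filter (fun h => tile (x h) (i, true) = c)).card := by
    rw [Finset.filter_image,
      Finset.card_image_of_injective _ (mul_left_injective (gen i)⁻¹)]
    congr 1
    apply Finset.filter_congr
    intro h _
    simp [hx h (i, false), dirElem, invDir]
  have b1 : (F.filter (fun h => tile (x h) (i, true) = c)).card
      ≤ (F.filter (fun h => tile (x h) (i, false) = c)).card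
        + (symmDiff (F.image (· * gen i)) F).card := by
    rw [h1]
    exact (filter_card_le_aux _ F).trans
      (Nat.add_le_add_left (sdiff_card_le_symmDiff _ _) _)
  have b2 : (F.filter (fun h => tile (x h) (i, false) = c)).card
      ≤ (F.filter (fun h => tile (x h) (i, true) = c)).card
        + (symmDiff (F.image (· * (gen i)⁻¹)) F).card := by
    rw [h2]
    exact (filter_card_le_aux _ F).trans
      (Nat.add_le_add_left (sdiff_card_le_symmDiff _ _) _)
  rw [abs_sub_le_iff]
  constructor <;> omega
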